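/- For a partition μ of n, the number of pairs (T, m) where T is a standard Young tableau of shape μ and m = (m_1,...,m_n) is an integer vector with 0 ≤ m_i < α_T(i) for all i, equals n!/μ!. Here α_T(i) is defined as follows: if i sits in cell (r_i, c_i) of T, let k be the largest entry of T with c_k = c_i + 1 and k < i; set α_T(i) = r_i - r_k, and if no such k exists set α_T(i) = r_i + 1. -/

import Mathlib

/-- The cells of the diagram of `μ` (0-based coordinates), inside an `N × N` box. -/
def diagOf (μ : ℕ → ℕ) (N : ℕ) : Finset (ℕ × ℕ) :=
  (Finset.range N ×ˢ Finset.range N).filter fun p => p.2 < μ p.1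

/-- `P` lists the positions of the entries `1,...,n` (entry `i+1` is at cell `P i`)
of a standard Young tableau of shape `μ`: it is a bijection onto the cells of `μ`,
increasing along rows and up columns. -/
def IsSYTpos (μ : ℕ → ℕ) (n : ℕ) (P : Fin n → ℕ × ℕ) : Prop :=
  Function.Injective P ∧ (∀ i, P i ∈ diagOf μ n) ∧ (∀ p ∈ diagOf μ n, ∃ i, P i = p) ∧
    (∀ i j : Fin n, (P i).1 = (P j).1 → (P i).2 < (P j).2 → i < j) ∧
    (∀ i j : Fin n, (P i).2 = (P j).2 → (P i).1 < (P j).1 → i < j)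

/-- `α_T(i)` for the tableau with position map `P` (index `i : Fin n` stands for the
entry `i+1`): if `k` is the largest entry smaller than `i+1` lying in column
`(P i).2 + 1`, then `α = (P i).1 - (P k).1`; if there is no such entry, `α = (P i).1 + 1`. -/
def alpha (n : ℕ) (P : Fin n → ℕ × ℕ) (i : Fin n) : ℕ :=
  if h : (Finset.univ.filter fun k : Fin n => k < i ∧ (P k).2 = (P i).2 + 1).Nonempty then
    (P i).1 - (P ((Finset.univ.filter fun k : Fin n => k < i ∧ (P k).2 = (P i).2 + 1).max' h)).1
  else (P i).1 + 1



lemma mem_diagOf {μ : ℕ → ℕ} {N : ℕ} {p : ℕ × ℕ} :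
    p ∈ diagOf μ N ↔ p.1 < N ∧ p.2 < N ∧ p.2 < μ p.1 := by
  simp [diagOf, Finset.mem_filter, Finset.mem_product, and_assoc]

lemma alpha_le (n : ℕ) (P : Fin n → ℕ × ℕ) (i : Fin n) : alpha n P i ≤ (P i).1 + 1 := by
  unfold alpha; split <;> omega

lemma good_finite (μ : ℕ → ℕ) (n : ℕ) :
    {pm : (Fin n → ℕ × ℕ) × (Fin n → ℕ) |
      IsSYTpos μ n pm.1 ∧ ∀ i, pm.2 i < alpha n pm.1 i}.Finite := by
  apply Set.Finite.subset (Set.Finite.prod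
    (Set.Finite.pi (fun _ : Fin n =>
      ((Finset.range n ×ˢ Finset.range n : Finset (ℕ × ℕ)) : Set (ℕ × ℕ)).toFinite))
    (Set.Finite.pi (fun _ : Fin n =>
      ((Finset.range (n+1) : Finset ℕ) : Set ℕ).toFinite)))
  rintro ⟨P, m⟩ ⟨hP, hm⟩
  dsimp only at hP hm
  constructor
  · intro i _
    have h := hP.2.1 i
    rw [mem_diagOf] at h
    simp only [Finset.coe_product, Set.mem_prod, Finset.mem_coe, Finset.mem_range]
    exact ⟨h.1, h.2.1⟩
  · intro i _
    have h1 := hm i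
    have h2 := alpha_le n P i
    have h3 := (mem_diagOf.1 (hP.2.1 i)).1
    simp only [Finset.mem_coe, Finset.mem_range]
    omega

lemma alpha_snoc (n : ℕ) (P' : Fin n → ℕ × ℕ) (x : ℕ × ℕ) (i : Fin n) :
    alpha (n+1) (Fin.snoc P' x) i.castSucc = alpha n P' i := by
  have hset : (Finset.univ.filter fun k : Fin (n+1) =>
        k < i.castSucc ∧ ((Fin.snoc P' x : Fin (n+1) → ℕ × ℕ) k).2
          = ((Fin.snoc P' x : Fin (n+1) → ℕ × ℕ) i.castSucc).2 + 1)
      = Finset.image Fin.castSucc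
        (Finset.univ.filter fun k : Fin n => k < i ∧ (P' k).2 = (P' i).2 + 1) := by
    ext k
    simp only [Finset.mem_filter, Finset.mem_image, Finset.mem_univ, true_and]
    constructor
    · rintro ⟨hlt, hcol⟩
      have hk : k ≠ Fin.last n := by
        intro h; subst h
        exact absurd (lt_trans hlt (Fin.castSucc_lt_last i)) (lt_irrefl _)
      obtain ⟨k', rfl⟩ := Fin.exists_castSucc_eq.2 hk
      refine ⟨k', ⟨Fin.castSucc_lt_castSucc_iff.1 hlt, ?_⟩, rfl⟩
      simpa [Fin.snoc_castSucc] using hcol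
    · rintro ⟨k', ⟨hlt, hcol⟩, rfl⟩
      exact ⟨Fin.castSucc_lt_castSucc_iff.2 hlt, by simpa [Fin.snoc_castSucc] using hcol⟩
  unfold alpha
  by_cases h : (Finset.univ.filter fun k : Fin n => k < i ∧ (P' k).2 = (P' i).2 + 1).Nonempty
  · rw [dif_pos (hset ▸ h.image Fin.castSucc), dif_pos h]
    have hmax : ∀ (hne), (Finset.univ.filter fun k : Fin (n+1) =>
        k < i.castSucc ∧ ((Fin.snoc P' x : Fin (n+1) → ℕ × ℕ) k).2
          = ((Fin.snoc P' x : Fin (n+1) → ℕ × ℕ) i.castSucc).2 + 1).max' hne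
        = Fin.castSucc ((Finset.univ.filter fun k : Fin n =>
            k < i ∧ (P' k).2 = (P' i).2 + 1).max' h) := by
      intro hne
      apply le_antisymm
      · apply Finset.max'_le
        intro k hk
        rw [hset] at hk
        obtain ⟨k', hk', rfl⟩ := Finset.mem_image.1 hk
        exact Fin.castSucc_le_castSucc_iff.2 (Finset.le_max' _ _ hk')
      · apply Finset.le_max'
        rw [hset]
        exact Finset.mem_image_of_mem _ (Finset.max'_mem _ h)
    rw [hmax]
    simp [Fin.snoc_castSucc]
  · rw [dif_neg, dif_neg h]
    · simp [Fin.snoc_castSucc]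
    · rw [hset]
      simpa using h


section Shape
variable {n : ℕ} {μ : ℕ → ℕ}

lemma mu_le (hsum : ∑ t ∈ Finset.range (n+1), μ t = n+1) {s : ℕ} (hs : s < n+1) :
    μ s ≤ n+1 :=
  hsum ▸ Finset.single_le_sum (fun t _ => Nat.zero_le _) (Finset.mem_range.2 hs)

lemma col_shape (hmono : Antitone μ)
    (hsum : ∑ t ∈ Finset.range (n+1), μ t = n+1) (h : 1 ≤ μ n) :
    ∀ t ≤ n, μ t = 1 := by
  have hall : ∀ t ∈ Finset.range (n+1), (fun _ => 1) t ≤ μ t := fun t ht =>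
    le_trans h (hmono (Nat.lt_succ_iff.1 (Finset.mem_range.1 ht)))
  have hsum1 : ∑ t ∈ Finset.range (n+1), (fun _ => 1) t = ∑ t ∈ Finset.range (n+1), μ t := by
    simp [hsum]
  have := (Finset.sum_eq_sum_iff_of_le hall).1 hsum1
  intro t ht
  exact ((this t (Finset.mem_range.2 (by omega)))).symm

lemma big_part (hmono : Antitone μ)
    (hsum : ∑ t ∈ Finset.range (n+1), μ t = n+1) {s : ℕ} (hs : s < n+1) (h : n+1 ≤ μ s) :
    s = 0 ∧ ∀ t, 1 ≤ t → t < n+1 → μ t = 0 := by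
  have hμ0 : n+1 ≤ μ 0 := le_trans h (hmono (Nat.zero_le s))
  have hpair : ∀ t, 1 ≤ t → t < n+1 → μ 0 + μ t ≤ n+1 := by
    intro t h1 h2
    have hsub : ({0, t} : Finset ℕ) ⊆ Finset.range (n+1) := by
      intro x hx
      simp only [Finset.mem_insert, Finset.mem_singleton] at hx
      rcases hx with rfl | rfl <;> simp [Finset.mem_range] <;> omega
    calc μ 0 + μ t = ∑ x ∈ ({0, t} : Finset ℕ), μ x := (Finset.sum_pair (by omega)).symm
      _ ≤ ∑ x ∈ Finset.range (n+1), μ x :=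
          Finset.sum_le_sum_of_subset hsub
      _ = n+1 := hsum
  constructor
  · by_contra hs0
    have := hpair s (by omega) hs
    omega
  · intro t h1 h2
    have := hpair t h1 h2
    omega
end Shape

section Corner
variable {n : ℕ} {μ : ℕ → ℕ}

lemma corner_last (hmono : Antitone μ) (hvanish : ∀ t, n+1 ≤ t → μ t = 0)
    (hsum : ∑ t ∈ Finset.range (n+1), μ t = n+1)
    {P : Fin (n+1) → ℕ × ℕ} (hP : IsSYTpos μ (n+1) P) :
    (P (Fin.last n)).2 + 1 = μ (P (Fin.last n)).1 ∧
      μ ((P (Fin.last n)).1 + 1) < μ (P (Fin.last n)).1 := by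
  obtain ⟨hinj, hmem, hsurj, hrow, hcol⟩ := hP
  have hd := mem_diagOf.1 (hmem (Fin.last n))
  set r := (P (Fin.last n)).1 with hr
  set c := (P (Fin.last n)).2 with hc
  have hμr : μ r ≤ n + 1 := mu_le hsum hd.1
  have h1 : c + 1 = μ r := by
    by_contra hne
    have hcell : ((r, c+1) : ℕ × ℕ) ∈ diagOf μ (n+1) := by
      rw [mem_diagOf]
      exact ⟨hd.1, by omega, by simp; omega⟩
    obtain ⟨j, hj⟩ := hsurj _ hcell
    have : Fin.last n < j := by
      apply hrow (Fin.last n) j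
      · rw [hj]
      · rw [hj]; omega
    exact absurd (Fin.le_last j) (not_le.2 this)
  refine ⟨h1, ?_⟩
  have hle : μ (r+1) ≤ μ r := hmono (Nat.le_succ r)
  rcases eq_or_lt_of_le hle with he | h
  · exfalso
    have hr1 : r + 1 < n + 1 := by
      by_contra h'
      have := hvanish (r+1) (by omega)
      omega
    have hcell : ((r+1, c) : ℕ × ℕ) ∈ diagOf μ (n+1) := by
      rw [mem_diagOf]
      refine ⟨hr1, hd.2.1, ?_⟩
      simp; omega
    obtain ⟨j, hj⟩ := hsurj _ hcell
    have : Fin.last n < j := by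
      apply hcol (Fin.last n) j
      · rw [hj]
      · rw [hj]; omega
    exact absurd (Fin.le_last j) (not_le.2 this)
  · exact h

lemma alpha_last (hmono : Antitone μ) (hvanish : ∀ t, n+1 ≤ t → μ t = 0)
    (hsum : ∑ t ∈ Finset.range (n+1), μ t = n+1)
    {P : Fin (n+1) → ℕ × ℕ} (hP : IsSYTpos μ (n+1) P) :
    alpha (n+1) P (Fin.last n) = (P (Fin.last n)).1 + 1 -
      ((Finset.range (n+1)).filter fun s => μ (P (Fin.last n)).1 < μ s).card := by
  have hc1 := (corner_last hmono hvanish hsum hP).1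
  obtain ⟨hinj, hmem, hsurj, hrow, hcol⟩ := hP
  have hd := mem_diagOf.1 (hmem (Fin.last n))
  set r := (P (Fin.last n)).1 with hr
  set c := (P (Fin.last n)).2 with hc
  set F := (Finset.univ.filter fun k : Fin (n+1) =>
    k < Fin.last n ∧ (P k).2 = (P (Fin.last n)).2 + 1) with hF
  set S := ((Finset.range (n+1)).filter fun s => μ r < μ s) with hS
  have hμr : μ r ≤ n + 1 := mu_le hsum hd.1
  have hkey : S = F.image (fun k => (P k).1) := by
    ext s
    simp only [hS, hF, Finset.mem_filter, Finset.mem_range, Finset.mem_image,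
      Finset.mem_univ, true_and]
    constructor
    · rintro ⟨hsn, hμs⟩
      have hμsle : μ s ≤ n + 1 := mu_le hsum hsn
      have hcell : ((s, c+1) : ℕ × ℕ) ∈ diagOf μ (n+1) := by
        rw [mem_diagOf]
        exact ⟨hsn, by omega, by simp; omega⟩
      obtain ⟨j, hj⟩ := hsurj _ hcell
      have hjne : j ≠ Fin.last n := by
        intro h; rw [h] at hj
        have : c = c + 1 := by
          conv_lhs => rw [hc, hj]
        omega
      refine ⟨j, ⟨lt_of_le_of_ne (Fin.le_last j) hjne, by rw [hj]⟩, by rw [hj]⟩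
    · rintro ⟨k, ⟨hklt, hkcol⟩, rfl⟩
      have hdk := mem_diagOf.1 (hmem k)
      exact ⟨hdk.1, by omega⟩
  by_cases hFne : F.Nonempty
  · have hKF : F.max' hFne ∈ F := F.max'_mem hFne
    set M := (P (F.max' hFne)).1 with hM
    have hMS : M ∈ S := by rw [hkey]; exact Finset.mem_image_of_mem _ hKF
    have hub : ∀ s ∈ S, s ≤ M := by
      intro s hsS
      rw [hkey] at hsS
      obtain ⟨k, hkF, rfl⟩ := Finset.mem_image.1 hsS
      by_contra hlt
      have hKcol : (P (F.max' hFne)).2 = (P k).2 := by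
        simp only [hF, Finset.mem_filter, Finset.mem_univ, true_and] at hKF hkF
        rw [hKF.2, hkF.2]
      have : F.max' hFne < k := hcol _ _ hKcol (by omega)
      exact absurd (F.le_max' k hkF) (not_le.2 this)
    have hMn : M < n + 1 := by
      simp only [hS, Finset.mem_filter, Finset.mem_range] at hMS
      exact hMS.1
    have hSeq : S = Finset.range (M+1) := by
      ext t
      simp only [Finset.mem_range, Nat.lt_succ_iff]
      constructor
      · intro ht; exact hub t ht
      · intro ht
        simp only [hS, Finset.mem_filter, Finset.mem_range] at hMS ⊢
        exact ⟨by omega, lt_of_lt_of_le hMS.2 (hmono ht)⟩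
    have hMr : M < r := by
      simp only [hS, Finset.mem_filter, Finset.mem_range] at hMS
      by_contra h
      have := hmono (not_lt.1 h)
      omega
    have hcard : S.card = M + 1 := by rw [hSeq, Finset.card_range]
    rw [show alpha (n+1) P (Fin.last n) = (P (Fin.last n)).1 -
        (P (F.max' hFne)).1 from dif_pos hFne]
    rw [hcard, ← hr, ← hM]
    omega
  · rw [show alpha (n+1) P (Fin.last n) = (P (Fin.last n)).1 + 1 from dif_neg hFne]
    have : S = ∅ := by
      rw [hkey, Finset.not_nonempty_iff_eq_empty.1 hFne, Finset.image_empty]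
    rw [this, ← hr]
    simp
end Corner


section WF
variable {n : ℕ} {μ : ℕ → ℕ}

lemma corner_eq_n (hmono : Antitone μ) (hsum : ∑ t ∈ Finset.range (n+1), μ t = n+1)
    (hcs : 1 ≤ μ n) {r : ℕ} (hr : r < n+1) (hcorner : μ (r+1) < μ r) : r = n := by
  have hall := col_shape hmono hsum hcs
  by_contra h
  have h1 := hall r (by omega)
  have h2 := hall (r+1) (by omega)
  omega

lemma restrict_good (hmono : Antitone μ) (hvanish : ∀ t, n+1 ≤ t → μ t = 0)
    (hsum : ∑ t ∈ Finset.range (n+1), μ t = n+1)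
    {P : Fin (n+1) → ℕ × ℕ} (hP : IsSYTpos μ (n+1) P)
    (hc1 : (P (Fin.last n)).2 + 1 = μ (P (Fin.last n)).1)
    (hcorner : μ ((P (Fin.last n)).1 + 1) < μ (P (Fin.last n)).1) :
    IsSYTpos (Function.update μ (P (Fin.last n)).1 (μ (P (Fin.last n)).1 - 1)) n
      (Fin.init P) := by
  obtain ⟨hinj, hmem, hsurj, hrow, hcol⟩ := hP
  have hd := mem_diagOf.1 (hmem (Fin.last n))
  set r := (P (Fin.last n)).1 with hrdef
  set c := (P (Fin.last n)).2 with hcdef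
  have hrn1 : r < n + 1 := hd.1
  refine ⟨?_, ?_, ?_, ?_, ?_⟩
  · intro a b h
    exact Fin.castSucc_inj.1 (hinj h)
  · intro i
    have hdi := mem_diagOf.1 (hmem i.castSucc)
    have hne : P i.castSucc ≠ P (Fin.last n) := fun h =>
      absurd (hinj h) (Fin.ne_of_lt (Fin.castSucc_lt_last i))
    have hrown : (P i.castSucc).1 < n := by
      by_contra h
      have hroweq : (P i.castSucc).1 = n := by omega
      have hμn : 1 ≤ μ n := by rw [← hroweq]; omega
      have hrn : r = n := corner_eq_n hmono hsum hμn hrn1 hcorner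
      have hc0 : c = 0 := by
        have := col_shape hmono hsum hμn r (by omega)
        omega
      have hcol0 : (P i.castSucc).2 = 0 := by
        have := col_shape hmono hsum hμn (P i.castSucc).1 (by omega)
        omega
      exact hne (Prod.ext (by omega) (by omega))
    have hcoln : (P i.castSucc).2 < n := by
      by_contra h
      have hcoleq : (P i.castSucc).2 = n := by omega
      have hbig : n + 1 ≤ μ (P i.castSucc).1 := by omega
      obtain ⟨hrow0, hrest⟩ := big_part hmono hsum hdi.1 hbig
      have hr0 : r = 0 := by
        by_contra h'
        have := hrest r (by omega) hrn1
        omega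
      have hμ0 : μ 0 = n + 1 := by
        have := mu_le hsum (show (0:ℕ) < n+1 by omega)
        rw [hrow0] at hbig
        omega
      have hcn : c = n := by rw [hr0] at hc1; omega
      exact hne (Prod.ext (by omega) (by omega))
    rw [mem_diagOf]
    refine ⟨hrown, hcoln, ?_⟩
    show (P i.castSucc).2 < Function.update μ r (μ r - 1) (P i.castSucc).1
    by_cases hrr : (P i.castSucc).1 = r
    · rw [hrr, Function.update_self]
      have hle : (P i.castSucc).2 ≤ c := by
        have := hdi.2.2
        rw [hrr] at this
        omega
      have hnec : (P i.castSucc).2 ≠ c := by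
        intro h
        exact hne (Prod.ext (by omega) (by omega))
      omega
    · rw [Function.update_of_ne hrr]
      exact hdi.2.2
  · intro p hp
    have hp' := mem_diagOf.1 hp
    have hple : p.2 < μ p.1 := by
      by_cases hrr : p.1 = r
      · have := hp'.2.2
        rw [hrr, Function.update_self] at this
        rw [hrr]
        omega
      · have := hp'.2.2
        rwa [Function.update_of_ne hrr] at this
    have hpd : p ∈ diagOf μ (n+1) := mem_diagOf.2 ⟨by omega, by omega, hple⟩
    obtain ⟨j, hj⟩ := hsurj p hpd
    have hjne : j ≠ Fin.last n := by
      intro h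
      rw [h] at hj
      have hpr : p.1 = r ∧ p.2 = c := by rw [← hj]; exact ⟨rfl, rfl⟩
      have := hp'.2.2
      rw [hpr.1, Function.update_self] at this
      omega
    obtain ⟨j', rfl⟩ := Fin.exists_castSucc_eq.2 hjne
    exact ⟨j', hj⟩
  · intro i j h1 h2
    exact Fin.castSucc_lt_castSucc_iff.1 (hrow i.castSucc j.castSucc h1 h2)
  · intro i j h1 h2
    exact Fin.castSucc_lt_castSucc_iff.1 (hcol i.castSucc j.castSucc h1 h2)

lemma snoc_good (hmono : Antitone μ) (hvanish : ∀ t, n+1 ≤ t → μ t = 0)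
    (hsum : ∑ t ∈ Finset.range (n+1), μ t = n+1)
    {r : ℕ} (hr : r < n+1) (hcorner : μ (r+1) < μ r)
    {P' : Fin n → ℕ × ℕ}
    (hP' : IsSYTpos (Function.update μ r (μ r - 1)) n P') :
    IsSYTpos μ (n+1) (Fin.snoc P' (r, μ r - 1)) := by
  obtain ⟨hinj, hmem, hsurj, hrow, hcol⟩ := hP'
  have hμr1 : 1 ≤ μ r := by omega
  have hμrle : μ r ≤ n + 1 := mu_le hsum hr
  have hXnot : ∀ a : Fin n, P' a ≠ (r, μ r - 1) := by
    intro a h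
    have := (mem_diagOf.1 (hmem a)).2.2
    rw [h] at this
    simp only [Function.update_self] at this
    omega
  refine ⟨?_, ?_, ?_, ?_, ?_⟩
  · intro a b h
    rcases Fin.eq_castSucc_or_eq_last a with ⟨a', rfl⟩ | rfl <;>
      rcases Fin.eq_castSucc_or_eq_last b with ⟨b', rfl⟩ | rfl
    · simp only [Fin.snoc_castSucc] at h
      rw [Fin.castSucc_inj]
      exact hinj h
    · simp only [Fin.snoc_castSucc, Fin.snoc_last] at h
      exact absurd h (hXnot a')
    · simp only [Fin.snoc_castSucc, Fin.snoc_last] at h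
      exact absurd h.symm (hXnot b')
    · rfl
  · intro i
    rcases Fin.eq_castSucc_or_eq_last i with ⟨i', rfl⟩ | rfl
    · rw [Fin.snoc_castSucc, mem_diagOf]
      have hdi := mem_diagOf.1 (hmem i')
      refine ⟨by omega, by omega, ?_⟩
      have := hdi.2.2
      by_cases hrr : (P' i').1 = r
      · rw [hrr, Function.update_self] at this
        rw [hrr]; omega
      · rwa [Function.update_of_ne hrr] at this
    · rw [Fin.snoc_last, mem_diagOf]
      exact ⟨hr, by omega, by simp; omega⟩
  · intro p hp
    have hp' := mem_diagOf.1 hp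
    by_cases hpx : p = (r, μ r - 1)
    · exact ⟨Fin.last n, by rw [Fin.snoc_last, hpx]⟩
    · have hp1n : p.1 < n := by
        by_contra h
        have hroweq : p.1 = n := by omega
        have hμn : 1 ≤ μ n := by
          have h2 := hp'.2.2
          rw [hroweq] at h2
          omega
        have hrn : r = n := corner_eq_n hmono hsum hμn hr hcorner
        have hμr1' : μ r = 1 := by
          rw [hrn]
          exact col_shape hmono hsum hμn n (le_refl n)
        have : p.2 = 0 := by
          have := hp'.2.2
          have h2 := col_shape hmono hsum hμn p.1 (by omega)
          omega
        exact hpx (Prod.ext (by omega) (by omega))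
      have hp2n : p.2 < n := by
        by_contra h
        have hcoleq : p.2 = n := by omega
        have hbig : n + 1 ≤ μ p.1 := by omega
        obtain ⟨hrow0, hrest⟩ := big_part hmono hsum hp'.1 hbig
        have hr0 : r = 0 := by
          by_contra h'
          have := hrest r (by omega) hr
          omega
        have hμ0 : μ 0 = n + 1 := by
          have := mu_le hsum (show (0:ℕ) < n+1 by omega)
          rw [hrow0] at hbig
          omega
        apply hpx
        apply Prod.ext
        · omega
        · rw [hr0, hμ0]
          omega
      have hpμ' : p.2 < Function.update μ r (μ r - 1) p.1 := by
        by_cases hrr : p.1 = r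
        · rw [hrr, Function.update_self]
          have : p.2 ≠ μ r - 1 := by
            intro h
            exact hpx (Prod.ext (by omega) (by omega))
          have := hp'.2.2
          rw [hrr] at this
          omega
        · rw [Function.update_of_ne hrr]
          exact hp'.2.2
      obtain ⟨j, hj⟩ := hsurj p (mem_diagOf.2 ⟨hp1n, hp2n, hpμ'⟩)
      exact ⟨j.castSucc, by rw [Fin.snoc_castSucc, hj]⟩
  · intro i j h1 h2
    rcases Fin.eq_castSucc_or_eq_last i with ⟨i', rfl⟩ | rfl <;>
      rcases Fin.eq_castSucc_or_eq_last j with ⟨j', rfl⟩ | rfl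
    · simp only [Fin.snoc_castSucc] at h1 h2
      exact Fin.castSucc_lt_castSucc_iff.2 (hrow i' j' h1 h2)
    · exact Fin.castSucc_lt_last i'
    · exfalso
      simp only [Fin.snoc_castSucc, Fin.snoc_last] at h1 h2
      have hdj := mem_diagOf.1 (hmem j')
      have := hdj.2.2
      rw [← h1, Function.update_self] at this
      omega
    · exact absurd h2 (lt_irrefl _)
  · intro i j h1 h2
    rcases Fin.eq_castSucc_or_eq_last i with ⟨i', rfl⟩ | rfl <;>
      rcases Fin.eq_castSucc_or_eq_last j with ⟨j', rfl⟩ | rfl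
    · simp only [Fin.snoc_castSucc] at h1 h2
      exact Fin.castSucc_lt_castSucc_iff.2 (hcol i' j' h1 h2)
    · exact Fin.castSucc_lt_last i'
    · exfalso
      simp only [Fin.snoc_castSucc, Fin.snoc_last] at h1 h2
      have hdj := mem_diagOf.1 (hmem j')
      have hne : (P' j').1 ≠ r := by omega
      have hupd := hdj.2.2
      rw [Function.update_of_ne hne] at hupd
      have : μ (P' j').1 ≤ μ (r+1) := hmono (by omega)
      omega
    · exact absurd h2 (lt_irrefl _)
end WF


section KeySum
open Finset
lemma key_sum (n : ℕ) (μ : ℕ → ℕ) (hmono : Antitone μ) (hvanish : ∀ t, n ≤ t → μ t = 0) :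
    ∑ r ∈ (Finset.range n).filter (fun r => μ (r+1) < μ r),
      μ r * (r + 1 - ((Finset.range n).filter fun s => μ r < μ s).card)
      = ∑ t ∈ Finset.range n, μ t := by
  set C := (Finset.range n).filter (fun r => μ (r+1) < μ r) with hC
  set I : ℕ → Finset ℕ := fun r => (Finset.range n).filter (fun s => μ s = μ r) with hI
  -- each corner term is the sum over its fiber
  have hterm : ∀ r ∈ C, μ r * (r + 1 - ((Finset.range n).filter fun s => μ r < μ s).card)
      = ∑ s ∈ I r, μ s := by
    intro r hr
    simp only [hC, mem_filter, mem_range] at hr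
    have h1 : (Finset.range n).filter (fun s => μ r ≤ μ s) = Finset.range (r+1) := by
      ext t
      simp only [mem_filter, mem_range]
      constructor
      · rintro ⟨ht, hle⟩
        by_contra h
        have : μ t ≤ μ (r+1) := hmono (by omega)
        omega
      · intro ht
        exact ⟨by omega, hmono (by omega)⟩
    have hsub : ((Finset.range n).filter fun s => μ r < μ s) ⊆
        (Finset.range n).filter (fun s => μ r ≤ μ s) := by
      intro s hs; simp only [mem_filter] at hs ⊢; exact ⟨hs.1, le_of_lt hs.2⟩
    have h2 : I r = ((Finset.range n).filter fun s => μ r ≤ μ s) \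
        ((Finset.range n).filter fun s => μ r < μ s) := by
      ext s
      simp only [hI, mem_filter, mem_sdiff, mem_range]
      constructor
      · rintro ⟨hs, he⟩; exact ⟨⟨hs, by omega⟩, fun h => by omega⟩
      · rintro ⟨⟨hs, hle⟩, hn⟩
        refine ⟨hs, ?_⟩
        by_contra h
        exact hn ⟨hs, by omega⟩
    have h3 : (I r).card = r + 1 - ((Finset.range n).filter fun s => μ r < μ s).card := by
      rw [h2, card_sdiff_of_subset hsub, h1, card_range]
    have h4 : ∑ s ∈ I r, μ s = (I r).card * μ r := by
      rw [← Finset.sum_const_nat (m := μ r) ?_]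
      intro s hs
      simp only [hI, mem_filter] at hs
      exact hs.2
    rw [h4, h3, Nat.mul_comm]
  rw [Finset.sum_congr rfl hterm]
  -- the fibers partition the nonzero part
  have hzero : ∑ t ∈ Finset.range n, μ t = ∑ t ∈ (Finset.range n).filter (fun t => μ t ≠ 0), μ t := by
    rw [Finset.sum_filter_ne_zero]
  have hdisj : (C : Set ℕ).PairwiseDisjoint I := by
    intro r hr r' hr' hne
    simp only [hC, coe_filter, Set.mem_setOf_eq, mem_range] at hr hr'
    have hval : μ r ≠ μ r' := by
      rcases Nat.lt_or_ge r r' with h | h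
      · have : μ r' ≤ μ (r+1) := hmono (by omega)
        omega
      · have hlt : r' < r := lt_of_le_of_ne h (Ne.symm hne)
        have : μ r ≤ μ (r'+1) := hmono (by omega)
        omega
    refine Finset.disjoint_left.2 (fun s hs hs' => ?_)
    simp only [hI, mem_filter] at hs hs'
    omega
  have hcover : (Finset.range n).filter (fun t => μ t ≠ 0) = C.biUnion I := by
    ext s
    simp only [mem_biUnion, mem_filter, mem_range]
    constructor
    · rintro ⟨hsn, hs0⟩
      set J := (Finset.range n).filter (fun t => μ t = μ s) with hJ
      have hJne : J.Nonempty := ⟨s, by simp [hJ, hsn]⟩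
      set r := J.max' hJne with hrdef
      have hrJ : r ∈ J := J.max'_mem hJne
      simp only [hJ, mem_filter, mem_range] at hrJ
      refine ⟨r, ?_, ?_⟩
      · simp only [hC, mem_filter, mem_range]
        refine ⟨hrJ.1, ?_⟩
        have hle : μ (r+1) ≤ μ r := hmono (by omega)
        rcases eq_or_lt_of_le hle with he | h
        · exfalso
          have hr1n : r + 1 < n := by
            by_contra h'
            have := hvanish (r+1) (by omega)
            omega
          have : r + 1 ∈ J := by simp only [hJ, mem_filter, mem_range]; omega
          have := J.le_max' _ this
          omega
        · exact h
      · simp only [hI, mem_filter, mem_range]; omega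
    · rintro ⟨r, hrC, hsI⟩
      simp only [hC, mem_filter, mem_range] at hrC
      simp only [hI, mem_filter, mem_range] at hsI
      exact ⟨hsI.1, by omega⟩
  rw [hzero, hcover, Finset.sum_biUnion hdisj]
end KeySum

section Step
variable {n : ℕ} {μ : ℕ → ℕ}

lemma card_step (n : ℕ) (μ : ℕ → ℕ) (hmono : Antitone μ)
    (hvanish : ∀ t, n + 1 ≤ t → μ t = 0)
    (hsum : ∑ t ∈ Finset.range (n+1), μ t = n+1) :
    Nat.card {pm : (Fin (n+1) → ℕ × ℕ) × (Fin (n+1) → ℕ) //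
        IsSYTpos μ (n+1) pm.1 ∧ ∀ i, pm.2 i < alpha (n+1) pm.1 i} =
      ∑ r ∈ (Finset.range (n+1)).filter (fun r => μ (r+1) < μ r),
        (r + 1 - ((Finset.range (n+1)).filter fun s => μ r < μ s).card) *
          Nat.card {pm : (Fin n → ℕ × ℕ) × (Fin n → ℕ) //
            IsSYTpos (Function.update μ r (μ r - 1)) n pm.1 ∧
              ∀ i, pm.2 i < alpha n pm.1 i} := by
  classical
  have hGcard : Nat.card {pm : (Fin (n+1) → ℕ × ℕ) × (Fin (n+1) → ℕ) //
      IsSYTpos μ (n+1) pm.1 ∧ ∀ i, pm.2 i < alpha (n+1) pm.1 i}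
      = (good_finite μ (n+1)).toFinset.card := by
    rw [← Set.ncard_eq_toFinset_card _ (good_finite μ (n+1))]
    exact Nat.card_coe_set_eq _
  rw [hGcard]
  rw [Finset.card_eq_sum_card_fiberwise
    (f := fun pm : (Fin (n+1) → ℕ × ℕ) × (Fin (n+1) → ℕ) => (pm.1 (Fin.last n)).1)
    (t := (Finset.range (n+1)).filter (fun r => μ (r+1) < μ r)) ?_]
  swap
  · intro pm hpm
    rw [Finset.mem_coe, Set.Finite.mem_toFinset] at hpm
    obtain ⟨hP, hm⟩ := hpm
    have hcor := corner_last hmono hvanish hsum hP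
    have hd := mem_diagOf.1 (hP.2.1 (Fin.last n))
    exact Finset.mem_filter.2 ⟨Finset.mem_range.2 hd.1, hcor.2⟩
  refine Finset.sum_congr rfl ?_
  intro r hr
  obtain ⟨hrn, hcorner⟩ := Finset.mem_filter.1 hr
  rw [Finset.mem_range] at hrn
  have hNcard : Nat.card {pm : (Fin n → ℕ × ℕ) × (Fin n → ℕ) //
      IsSYTpos (Function.update μ r (μ r - 1)) n pm.1 ∧ ∀ i, pm.2 i < alpha n pm.1 i}
      = (good_finite (Function.update μ r (μ r - 1)) n).toFinset.card := by
    rw [← Set.ncard_eq_toFinset_card _ (good_finite (Function.update μ r (μ r - 1)) n)]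
    exact Nat.card_coe_set_eq _
  rw [hNcard]
  rw [← Finset.card_range (r + 1 - ((Finset.range (n+1)).filter fun s => μ r < μ s).card),
    ← Finset.card_product]
  refine Finset.card_bij'
    (fun pm _ => ((pm.2 (Fin.last n), (Fin.init pm.1, Fin.init pm.2)) :
      ℕ × ((Fin n → ℕ × ℕ) × (Fin n → ℕ))))
    (fun x _ => ((Fin.snoc x.2.1 (r, μ r - 1), Fin.snoc x.2.2 x.1) :
      (Fin (n+1) → ℕ × ℕ) × (Fin (n+1) → ℕ))) ?_ ?_ ?_ ?_
  · -- forward membership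
    rintro ⟨P, m⟩ hpm
    rw [Finset.mem_filter, Set.Finite.mem_toFinset] at hpm
    obtain ⟨⟨hP, hm⟩, hfix⟩ := hpm
    dsimp only at hP hm hfix ⊢
    have hcor := corner_last hmono hvanish hsum hP
    rw [Finset.mem_product]
    constructor
    · -- first component in range
      rw [Finset.mem_range]
      have h1 := hm (Fin.last n)
      have h2 := alpha_last hmono hvanish hsum hP
      rw [h2, hfix] at h1
      exact h1
    · rw [Set.Finite.mem_toFinset]
      have hres := restrict_good hmono hvanish hsum hP hcor.1 hcor.2
      rw [hfix] at hres
      refine ⟨hres, ?_⟩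
      intro i
      have halpha : alpha (n+1) P i.castSucc = alpha n (Fin.init P) i := by
        conv_lhs => rw [← Fin.snoc_init_self P]
        exact alpha_snoc n (Fin.init P) (P (Fin.last n)) i
      have := hm i.castSucc
      rw [halpha] at this
      exact this
  · -- backward membership
    rintro ⟨e, P', m'⟩ hx
    rw [Finset.mem_product, Finset.mem_range, Set.Finite.mem_toFinset] at hx
    obtain ⟨he, hP', hm'⟩ := hx
    dsimp only at he hP' hm' ⊢
    have hsyt := snoc_good hmono hvanish hsum hrn hcorner hP'
    rw [Finset.mem_filter, Set.Finite.mem_toFinset]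
    refine ⟨⟨hsyt, ?_⟩, ?_⟩
    swap
    · show ((Fin.snoc P' (r, μ r - 1) : Fin (n+1) → ℕ × ℕ) (Fin.last n)).1 = r
      rw [Fin.snoc_last]
    intro i
    rcases Fin.eq_castSucc_or_eq_last i with ⟨i', rfl⟩ | rfl
    · rw [alpha_snoc]
      show (Fin.snoc m' e : Fin (n+1) → ℕ) i'.castSucc < _
      rw [Fin.snoc_castSucc]
      exact hm' i'
    · show (Fin.snoc m' e : Fin (n+1) → ℕ) (Fin.last n) < _
      rw [Fin.snoc_last]
      have h2 := alpha_last hmono hvanish hsum hsyt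
      rw [h2]
      have : ((Fin.snoc P' (r, μ r - 1) : Fin (n+1) → ℕ × ℕ) (Fin.last n)).1 = r := by
        rw [Fin.snoc_last]
      rw [this]
      exact he
  · -- left inverse
    rintro ⟨P, m⟩ hpm
    rw [Finset.mem_filter, Set.Finite.mem_toFinset] at hpm
    obtain ⟨⟨hP, hm⟩, hfix⟩ := hpm
    dsimp only at hP hm hfix ⊢
    have hcor := corner_last hmono hvanish hsum hP
    have hlast : ((r, μ r - 1) : ℕ × ℕ) = P (Fin.last n) := by
      have h1 := hcor.1
      rw [hfix] at h1
      exact (Prod.ext hfix (by omega)).symm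
    refine Prod.ext ?_ ?_
    · show Fin.snoc (Fin.init P) (r, μ r - 1) = P
      rw [hlast, Fin.snoc_init_self]
    · show Fin.snoc (Fin.init m) (m (Fin.last n)) = m
      rw [Fin.snoc_init_self]
  · -- right inverse
    rintro ⟨e, P', m'⟩ hx
    dsimp only
    refine Prod.ext ?_ ?_
    · show (Fin.snoc m' e : Fin (n+1) → ℕ) (Fin.last n) = e
      rw [Fin.snoc_last]
    · refine Prod.ext ?_ ?_
      · show Fin.init (Fin.snoc P' (r, μ r - 1) : Fin (n+1) → ℕ × ℕ) = P'
        exact Fin.init_snoc _ _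
      · show Fin.init (Fin.snoc m' e : Fin (n+1) → ℕ) = m'
        exact Fin.init_snoc _ _
end Step

lemma main_count (n : ℕ) : ∀ (μ : ℕ → ℕ), Antitone μ →
    (∀ t, n ≤ t → μ t = 0) → (∑ t ∈ Finset.range n, μ t = n) →
    Nat.card {pm : (Fin n → ℕ × ℕ) × (Fin n → ℕ) //
        IsSYTpos μ n pm.1 ∧ ∀ i, pm.2 i < alpha n pm.1 i} *
      ∏ t ∈ Finset.range n, (μ t).factorial = n.factorial := by
  induction n with
  | zero =>
    intro μ _ _ _
    simp only [Finset.range_zero, Finset.prod_empty, mul_one, Nat.factorial_zero]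
    have hdiag : diagOf μ 0 = ∅ := by
      ext p
      simp [diagOf]
    haveI : Unique {pm : (Fin 0 → ℕ × ℕ) × (Fin 0 → ℕ) //
        IsSYTpos μ 0 pm.1 ∧ ∀ i, pm.2 i < alpha 0 pm.1 i} := by
      refine ⟨⟨⟨((fun i => i.elim0), (fun i => i.elim0)), ?_, fun i => i.elim0⟩⟩, ?_⟩
      · refine ⟨fun a => a.elim0, fun i => i.elim0, ?_, fun i => i.elim0, fun i => i.elim0⟩
        intro p hp
        rw [hdiag] at hp
        exact absurd hp (Finset.notMem_empty p)
      · rintro ⟨⟨P, m⟩, h⟩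
        apply Subtype.ext
        refine Prod.ext ?_ ?_ <;> funext i <;> exact i.elim0
    exact Nat.card_unique
  | succ n ih =>
    intro μ hmono hvanish hsum
    have hμn1 : μ n ≤ 1 := by
      by_contra h
      have hall : ∀ t ∈ Finset.range (n+1), 2 ≤ μ t := fun t ht =>
        le_trans (by omega) (hmono (Nat.lt_succ_iff.1 (Finset.mem_range.1 ht)))
      have h2 : ∑ t ∈ Finset.range (n+1), 2 ≤ ∑ t ∈ Finset.range (n+1), μ t :=
        Finset.sum_le_sum hall
      rw [Finset.sum_const, Finset.card_range, smul_eq_mul] at h2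
      omega
    rw [card_step n μ hmono hvanish hsum, Finset.sum_mul]
    have hterm : ∀ r ∈ (Finset.range (n+1)).filter (fun r => μ (r+1) < μ r),
        (r + 1 - ((Finset.range (n+1)).filter fun s => μ r < μ s).card) *
          Nat.card {pm : (Fin n → ℕ × ℕ) × (Fin n → ℕ) //
            IsSYTpos (Function.update μ r (μ r - 1)) n pm.1 ∧
              ∀ i, pm.2 i < alpha n pm.1 i} *
          ∏ t ∈ Finset.range (n+1), (μ t).factorial
        = μ r * (r + 1 - ((Finset.range (n+1)).filter fun s => μ r < μ s).card)
            * n.factorial := by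
      intro r hr
      obtain ⟨hrn, hcorner⟩ := Finset.mem_filter.1 hr
      rw [Finset.mem_range] at hrn
      set ν := Function.update μ r (μ r - 1) with hν
      have hμr1 : 1 ≤ μ r := by omega
      have hνval : ∀ t, t ≠ r → ν t = μ t := fun t ht => Function.update_of_ne ht _ _
      have hνr : ν r = μ r - 1 := Function.update_self _ _ _
      have hmono' : Antitone ν := by
        intro a b hab
        by_cases hbr : b = r
        · by_cases har : a = r
          · rw [har, hbr]
          · rw [hbr, hνr, hνval a har]
            have : μ r ≤ μ a := hmono (by omega)
            omega
        · by_cases har : a = r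
          · rw [hνval b hbr, har, hνr]
            have hb : r + 1 ≤ b := by omega
            have := hmono hb
            omega
          · rw [hνval a har, hνval b hbr]
            exact hmono hab
      have hνn : ν n = 0 := by
        by_cases hrn' : r = n
        · rw [← hrn', hνr]
          subst hrn'
          omega
        · rw [hνval n (fun h => hrn' h.symm)]
          by_contra h
          have hcs := col_shape hmono hsum (by omega)
          have h1 := hcs r (by omega)
          have h2 := hcs (r+1) ?_
          · omega
          · by_contra h'
            have := hvanish (r+1) (by omega)
            omega
      have hvanish' : ∀ t, n ≤ t → ν t = 0 := by
        intro t ht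
        rcases Nat.eq_or_lt_of_le ht with rfl | h
        · exact hνn
        · rw [hνval t (by omega)]
          exact hvanish t (by omega)
      have hsplit : μ r + ∑ x ∈ (Finset.range (n+1)).erase r, μ x
          = ∑ x ∈ Finset.range (n+1), μ x :=
        Finset.add_sum_erase _ _ (Finset.mem_range.2 hrn)
      rw [hsum] at hsplit
      have hsumν : ∑ t ∈ Finset.range (n+1), ν t = n := by
        rw [hν, Finset.sum_update_of_mem (Finset.mem_range.2 hrn), ← Finset.erase_eq]
        omega
      have hsum' : ∑ t ∈ Finset.range n, ν t = n := by
        have := Finset.sum_range_succ ν n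
        rw [hsumν] at this
        omega
      have hih := ih ν hmono' hvanish' hsum'
      -- factorial identity
      have hfact : ∏ t ∈ Finset.range (n+1), (μ t).factorial
          = μ r * ∏ t ∈ Finset.range n, (ν t).factorial := by
        have e1 : ∏ t ∈ Finset.range (n+1), (ν t).factorial
            = ∏ t ∈ Finset.range n, (ν t).factorial := by
          rw [Finset.prod_range_succ, hνn]
          simp
        have e2 : ∏ t ∈ Finset.range (n+1), (μ t).factorial
            = μ r * ∏ t ∈ Finset.range (n+1), (ν t).factorial := by
          rw [← Finset.mul_prod_erase (Finset.range (n+1)) (fun t => (μ t).factorial)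
            (Finset.mem_range.2 hrn)]
          rw [← Finset.mul_prod_erase (Finset.range (n+1)) (fun t => (ν t).factorial)
            (Finset.mem_range.2 hrn)]
          have e3 : ∏ t ∈ (Finset.range (n+1)).erase r, (ν t).factorial
              = ∏ t ∈ (Finset.range (n+1)).erase r, (μ t).factorial := by
            refine Finset.prod_congr rfl ?_
            intro t ht
            rw [hνval t (Finset.ne_of_mem_erase ht)]
          rw [e3, hνr, ← mul_assoc]
          congr 1
          conv_lhs => rw [show μ r = (μ r - 1) + 1 by omega]
          rw [Nat.factorial_succ]
          congr 1
          omega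
        rw [e2, e1]
      rw [hfact]
      calc (r + 1 - ((Finset.range (n+1)).filter fun s => μ r < μ s).card) *
            Nat.card {pm : (Fin n → ℕ × ℕ) × (Fin n → ℕ) //
              IsSYTpos ν n pm.1 ∧ ∀ i, pm.2 i < alpha n pm.1 i} *
            (μ r * ∏ t ∈ Finset.range n, (ν t).factorial)
          = μ r * (r + 1 - ((Finset.range (n+1)).filter fun s => μ r < μ s).card) *
            (Nat.card {pm : (Fin n → ℕ × ℕ) × (Fin n → ℕ) //
              IsSYTpos ν n pm.1 ∧ ∀ i, pm.2 i < alpha n pm.1 i} *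
              ∏ t ∈ Finset.range n, (ν t).factorial) := by ring
        _ = μ r * (r + 1 - ((Finset.range (n+1)).filter fun s => μ r < μ s).card) *
              n.factorial := by rw [hih]
    rw [Finset.sum_congr rfl hterm, ← Finset.sum_mul, key_sum (n+1) μ hmono hvanish,
      hsum, Nat.factorial_succ]

theorem stmt2' (n : ℕ) (μ : ℕ → ℕ) (hmono : Antitone μ)
    (hvanish : ∀ t, n ≤ t → μ t = 0) (hsum : ∑ t ∈ Finset.range n, μ t = n) :
    (Nat.card {pm : (Fin n → ℕ × ℕ) × (Fin n → ℕ) //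
        IsSYTpos μ n pm.1 ∧ ∀ i, pm.2 i < alpha n pm.1 i} : ℚ) =
      (n.factorial : ℚ) / ((∏ t ∈ Finset.range n, (μ t).factorial : ℕ) : ℚ) := by
  have h := main_count n μ hmono hvanish hsum
  have hpos : 0 < ∏ t ∈ Finset.range n, (μ t).factorial :=
    Finset.prod_pos (fun t _ => Nat.factorial_pos _)
  have hne : ((∏ t ∈ Finset.range n, (μ t).factorial : ℕ) : ℚ) ≠ 0 :=
    Nat.cast_ne_zero.2 (by omega)
  rw [eq_div_iff hne]
  exact_mod_cast h
/-- the number of pairs `(T, m)` with `T` a standard Young tableau of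
shape `μ ⊢ n` and `m = (m_1,…,m_n)` with `0 ≤ m_i < α_T(i)` equals `n!/μ!`. -/
theorem stmt2 (n : ℕ) (μ : ℕ → ℕ) (hmono : Antitone μ)
    (hvanish : ∀ t, n ≤ t → μ t = 0) (hsum : ∑ t ∈ Finset.range n, μ t = n) :
    (Nat.card {pm : (Fin n → ℕ × ℕ) × (Fin n → ℕ) //
        IsSYTpos μ n pm.1 ∧ ∀ i, pm.2 i < alpha n pm.1 i} : ℚ) =
      (n.factorial : ℚ) / ((∏ t ∈ Finset.range n, (μ t).factorial : ℕ) : ℚ) :=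
  stmt2' n μ hmono hvanish hsum
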